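/- arXiv:1912.09990 — 3 statements merged into one kernel-verified Lean document; each statement's English description precedes it below -/
import Mathlib

section
/- Let ν be a probability measure on ℝⁿ with finite second moments, mean μ and covariance Σ, and let P be any d×d real matrix. Then the expected quadratic conjugation of A(w) satisfies ∫ A(w)ᵀ P A(w) dν(w) = Ā₀ᵀ (Σ̃ ⊗ P) Ā₀, where Σ̃ = [[1, μᵀ], [μ, Σ + μμᵀ]]. -/
open MeasureTheory Matrix
open scoped Kronecker

noncomputable section

/-- `A(w) = A₀ + Σᵢ w⁽ⁱ⁾ Aᵢ`. -/
def Amat {n d : ℕ} (A : Fin (n + 1) → Matrix (Fin d) (Fin d) ℝ) (w : Fin n → ℝ) :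
    Matrix (Fin d) (Fin d) ℝ :=
  A 0 + ∑ i : Fin n, w i • A i.succ

/-- `Ā₀`: the `((n+1)d) × d` vertical stacking of `A₀, A₁, …, Aₙ`. -/
def Abar {n d : ℕ} (A : Fin (n + 1) → Matrix (Fin d) (Fin d) ℝ) :
    Matrix (Fin (n + 1) × Fin d) (Fin d) ℝ :=
  Matrix.of fun p j => A p.1 p.2 j

/-- `Σ̃ = [[1, μᵀ], [μ, Σ + μμᵀ]]`. -/
def tildeSigma {n : ℕ} (μ : Fin n → ℝ) (S : Matrix (Fin n) (Fin n) ℝ) :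
    Matrix (Fin (n + 1)) (Fin (n + 1)) ℝ :=
  Matrix.of fun i j =>
    Fin.cases (motive := fun _ => ℝ)
      (Fin.cases (motive := fun _ => ℝ) (1 : ℝ) (fun j' => μ j') j)
      (fun i' => Fin.cases (motive := fun _ => ℝ) (μ i')
        (fun j' => S i' j' + μ i' * μ j') j) i

/-- For a probability measure `ν` on `ℝⁿ` with finite second moments, mean `μ`
and covariance `Σ`, and any `d×d` matrix `P`,
`∫ A(w)ᵀ P A(w) dν(w) = Ā₀ᵀ (Σ̃ ⊗ P) Ā₀` (stated entrywise). -/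
theorem stmt0 {n d : ℕ} (A : Fin (n + 1) → Matrix (Fin d) (Fin d) ℝ)
    (P : Matrix (Fin d) (Fin d) ℝ)
    (ν : Measure (Fin n → ℝ)) [IsProbabilityMeasure ν]
    (hint1 : ∀ i, Integrable (fun w : Fin n → ℝ => w i) ν)
    (hint2 : ∀ i j, Integrable (fun w : Fin n → ℝ => w i * w j) ν)
    (μ : Fin n → ℝ) (hμ : ∀ i, μ i = ∫ w, w i ∂ν)
    (Sg : Matrix (Fin n) (Fin n) ℝ)
    (hSg : ∀ i j, Sg i j = ∫ w, (w i - μ i) * (w j - μ j) ∂ν) :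
    ∀ i j, (∫ w, ((Amat A w)ᵀ * P * Amat A w) i j ∂ν)
      = ((Abar A)ᵀ * (tildeSigma μ Sg ⊗ₖ P) * Abar A) i j := by
  intro i j
  classical
  set c : (Fin n → ℝ) → Fin (n + 1) → ℝ :=
    fun w => Fin.cases (motive := fun _ => ℝ) 1 w with hc
  have hc0 : ∀ w, c w 0 = 1 := fun w => rfl
  have hcs : ∀ w (k : Fin n), c w k.succ = w k := fun w k => rfl
  -- A(w) as a sum
  have hA : ∀ w, Amat A w = ∑ k : Fin (n + 1), c w k • A k := by
    intro w
    rw [Fin.sum_univ_succ]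
    simp [Amat, hc0, hcs]
  -- entrywise expansion of the integrand
  have hentry : ∀ w, ((Amat A w)ᵀ * P * Amat A w) i j
      = ∑ k : Fin (n + 1), ∑ l : Fin (n + 1),
          (c w k * c w l) * (((A k)ᵀ * P * A l) i j) := by
    intro w
    rw [hA]
    simp only [Matrix.transpose_sum, Matrix.transpose_smul, Matrix.sum_mul,
      Matrix.mul_sum, Matrix.smul_mul, Matrix.mul_smul, Matrix.sum_apply,
      Matrix.smul_apply, smul_eq_mul, smul_smul, Finset.mul_sum]
    rw [Finset.sum_comm]
    refine Finset.sum_congr rfl fun k _ => Finset.sum_congr rfl fun l _ => ?_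
    ring
  -- integrability of the coefficient products
  have hc_int : ∀ k l : Fin (n + 1), Integrable (fun w => c w k * c w l) ν := by
    intro k l
    induction k using Fin.cases with
    | zero =>
      induction l using Fin.cases with
      | zero => simpa [hc0] using (integrable_const (1 : ℝ) (μ := ν))
      | succ l' => simpa [hc0, hcs] using hint1 l'
    | succ k' =>
      induction l using Fin.cases with
      | zero => simpa [hc0, hcs] using hint1 k'
      | succ l' => simpa [hcs] using hint2 k' l'
  -- second moments
  have key : ∀ a b : Fin n, (∫ w, w a * w b ∂ν) = Sg a b + μ a * μ b := by
    intro a b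
    have hexp : ∀ w : Fin n → ℝ, (w a - μ a) * (w b - μ b)
        = w a * w b - μ b * w a - μ a * w b + μ a * μ b := by intro w; ring
    have h1 : Integrable (fun w : Fin n → ℝ => w a * w b) ν := hint2 a b
    have h2 : Integrable (fun w : Fin n → ℝ => μ b * w a) ν := (hint1 a).const_mul _
    have h3 : Integrable (fun w : Fin n → ℝ => μ a * w b) ν := (hint1 b).const_mul _
    have h4 : Integrable (fun _ : Fin n → ℝ => μ a * μ b) ν := integrable_const _
    have h12 : Integrable (fun w : Fin n → ℝ => w a * w b - μ b * w a) ν := h1.sub h2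
    have h123 : Integrable (fun w : Fin n → ℝ => w a * w b - μ b * w a - μ a * w b) ν :=
      h12.sub h3
    rw [hSg a b]
    simp_rw [hexp]
    rw [integral_add h123 h4, integral_sub h12 h3,
      integral_sub h1 h2, integral_const_mul, integral_const_mul, integral_const]
    simp only [measure_univ, probReal_univ, ENNReal.toReal_one, smul_eq_mul, one_mul]
    rw [← hμ a, ← hμ b]
    ring
  -- integral of coefficient products = tildeSigma
  have hmom : ∀ k l : Fin (n + 1), (∫ w, c w k * c w l ∂ν) = tildeSigma μ Sg k l := by
    intro k l
    induction k using Fin.cases with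
    | zero =>
      induction l using Fin.cases with
      | zero => simp [hc0, tildeSigma]
      | succ l' => simp [hc0, hcs, tildeSigma, ← hμ l']
    | succ k' =>
      induction l using Fin.cases with
      | zero => simp [hc0, hcs, tildeSigma, ← hμ k']
      | succ l' => simp [hcs, tildeSigma, key k' l']
  -- RHS expansion
  have hR : ((Abar A)ᵀ * (tildeSigma μ Sg ⊗ₖ P) * Abar A) i j
      = ∑ k : Fin (n + 1), ∑ l : Fin (n + 1),
          tildeSigma μ Sg k l * (((A k)ᵀ * P * A l) i j) := by
    simp only [Matrix.mul_apply, Matrix.transpose_apply, Matrix.kroneckerMap_apply,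
      Abar, Matrix.of_apply, Finset.sum_mul, Finset.mul_sum]
    rw [Fintype.sum_prod_type]
    simp_rw [Fintype.sum_prod_type]
    rw [show (∑ x : Fin (n + 1), ∑ y : Fin d, ∑ k : Fin (n + 1), ∑ a : Fin d,
          A k a i * (tildeSigma μ Sg k x * P a y) * A x y j)
        = ∑ x : Fin (n + 1), ∑ k : Fin (n + 1), ∑ y : Fin d, ∑ a : Fin d,
          A k a i * (tildeSigma μ Sg k x * P a y) * A x y j from
      Finset.sum_congr rfl fun x _ => Finset.sum_comm, Finset.sum_comm]
    refine Finset.sum_congr rfl fun k _ => Finset.sum_congr rfl fun l _ =>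
      Finset.sum_congr rfl fun b _ => Finset.sum_congr rfl fun a _ => ?_
    ring
  rw [hR]
  calc (∫ w, ((Amat A w)ᵀ * P * Amat A w) i j ∂ν)
      = ∫ w, ∑ k : Fin (n + 1), ∑ l : Fin (n + 1),
          (c w k * c w l) * (((A k)ᵀ * P * A l) i j) ∂ν := by
        exact integral_congr_ae (Filter.Eventually.of_forall hentry)
    _ = ∑ k : Fin (n + 1), ∑ l : Fin (n + 1),
          (∫ w, c w k * c w l ∂ν) * (((A k)ᵀ * P * A l) i j) := by
        rw [integral_finset_sum _ fun k _ =>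
          integrable_finset_sum _ fun l _ => (hc_int k l).mul_const _]
        refine Finset.sum_congr rfl fun k _ => ?_
        rw [integral_finset_sum _ fun l _ => (hc_int k l).mul_const _]
        exact Finset.sum_congr rfl fun l _ => integral_mul_const _ _
    _ = ∑ k : Fin (n + 1), ∑ l : Fin (n + 1),
          tildeSigma μ Sg k l * (((A k)ᵀ * P * A l) i j) := by
        simp_rw [hmom]

end
end

section
/- Let (Ω, F, P) be a probability space, let ν be a probability measure on ℝⁿ with finite second moments, and let 𝒜 : Ω → (sets of probability measures on ℝⁿ with finite second moments) and P̂ : Ω → (symmetric d×d matrices) be maps such that for every ω ∈ Ω, P̂(ω) is positive definite and for every ν' ∈ 𝒜(ω) the matrix P̂(ω) − ∫ A(w)ᵀ P̂(ω) A(w) dν'(w) is positive definite. If the event {ω : ν ∈ 𝒜(ω)} is measurable with P-probability at least 1 − β, then P[{ω : the system x_{k+1} = A(w_k)x_k with i.i.d. disturbances w_k ∼ ν is exponentially mean square stable}] ≥ 1 − β. -/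
open MeasureTheory Matrix Filter
noncomputable section

lemma amat_apply {n d : ℕ} (A : Fin (n + 1) → Matrix (Fin d) (Fin d) ℝ) (w : Fin n → ℝ)
    (i p : Fin d) : Amat A w i p = A 0 i p + ∑ l, (A l.succ) i p * w l := by
  simp [Amat, Matrix.sum_apply, mul_comm]

lemma amat_mul_right {n d : ℕ} (A : Fin (n + 1) → Matrix (Fin d) (Fin d) ℝ)
    (B : Matrix (Fin d) (Fin d) ℝ) (w : Fin n → ℝ) :
    Amat A w * B = Amat (fun k => A k * B) w := by
  simp [Amat, add_mul, Finset.sum_mul, smul_mul_assoc]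

lemma amat_transpose {n d : ℕ} (A : Fin (n + 1) → Matrix (Fin d) (Fin d) ℝ) (w : Fin n → ℝ) :
    (Amat A w)ᵀ = Amat (fun k => (A k)ᵀ) w := by
  simp [Amat, transpose_add, transpose_smul, Matrix.transpose_sum]

lemma integrable_affine_mul {n : ℕ} {ν : Measure (Fin n → ℝ)} [IsProbabilityMeasure ν]
    (h1 : ∀ i, Integrable (fun w : Fin n → ℝ => w i) ν)
    (h2 : ∀ i j, Integrable (fun w : Fin n → ℝ => w i * w j) ν)
    (a c : ℝ) (b e : Fin n → ℝ) :
    Integrable (fun w : Fin n → ℝ => (a + ∑ l, b l * w l) * (c + ∑ l, e l * w l)) ν := by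
  have key : (fun w : Fin n → ℝ => (a + ∑ l, b l * w l) * (c + ∑ l, e l * w l))
      = fun w => ((a*c + ∑ l, (a * e l) * w l) + ∑ l, (c * b l) * w l)
          + ∑ l : Fin n, ∑ m : Fin n, (b l * e m) * (w l * w m) := by
    funext w
    have h3 : (∑ l, b l * w l) * (∑ m, e m * w m)
        = ∑ l : Fin n, ∑ m : Fin n, (b l * e m) * (w l * w m) := by
      rw [Finset.sum_mul]
      refine Finset.sum_congr rfl fun l _ => ?_
      rw [Finset.mul_sum]
      exact Finset.sum_congr rfl fun m _ => by ring
    have h4 : a * (∑ l, e l * w l) = ∑ l, (a * e l) * w l := by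
      rw [Finset.mul_sum]
      exact Finset.sum_congr rfl fun l _ => by ring
    have h5 : (∑ l, b l * w l) * c = ∑ l, (c * b l) * w l := by
      rw [Finset.sum_mul]
      exact Finset.sum_congr rfl fun l _ => by ring
    calc (a + ∑ l, b l * w l) * (c + ∑ l, e l * w l)
        = a*c + a * (∑ l, e l * w l) + (∑ l, b l * w l) * c
          + (∑ l, b l * w l) * (∑ m, e m * w m) := by ring
      _ = _ := by rw [h3, h4, h5]
  rw [key]
  refine (((integrable_const (a*c)).add ?_).add ?_).add ?_
  · exact integrable_finset_sum _ fun l _ => (h1 l).const_mul _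
  · exact integrable_finset_sum _ fun l _ => (h1 l).const_mul _
  · exact integrable_finset_sum _ fun l _ =>
      integrable_finset_sum _ fun m _ => (h2 l m).const_mul _

lemma integrable_entry {n d : ℕ} (A : Fin (n + 1) → Matrix (Fin d) (Fin d) ℝ)
    (B : Matrix (Fin d) (Fin d) ℝ) {ν : Measure (Fin n → ℝ)} [IsProbabilityMeasure ν]
    (h1 : ∀ i, Integrable (fun w : Fin n → ℝ => w i) ν)
    (h2 : ∀ i j, Integrable (fun w : Fin n → ℝ => w i * w j) ν)
    (i j : Fin d) :
    Integrable (fun w => (Amat A w * B * (Amat A w)ᵀ) i j) ν := by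
  have key : (fun w => (Amat A w * B * (Amat A w)ᵀ) i j)
      = fun w => ∑ q, ((A 0 * B) i q + ∑ l, ((A l.succ * B)) i q * w l)
          * ((A 0) j q + ∑ l, (A l.succ) j q * w l) := by
    funext w
    rw [amat_mul_right, Matrix.mul_apply]
    refine Finset.sum_congr rfl fun q _ => ?_
    rw [Matrix.transpose_apply, amat_apply, amat_apply]
  rw [key]
  exact integrable_finset_sum _ fun q _ => integrable_affine_mul h1 h2 _ _ _ _

lemma integrable_entry' {n d : ℕ} (A : Fin (n + 1) → Matrix (Fin d) (Fin d) ℝ)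
    (B : Matrix (Fin d) (Fin d) ℝ) {ν : Measure (Fin n → ℝ)} [IsProbabilityMeasure ν]
    (h1 : ∀ i, Integrable (fun w : Fin n → ℝ => w i) ν)
    (h2 : ∀ i j, Integrable (fun w : Fin n → ℝ => w i * w j) ν)
    (i j : Fin d) :
    Integrable (fun w => ((Amat A w)ᵀ * B * Amat A w) i j) ν := by
  have key : ∀ w : Fin n → ℝ, (Amat A w)ᵀ * B * Amat A w
      = Amat (fun k => (A k)ᵀ) w * B * (Amat (fun k => (A k)ᵀ) w)ᵀ := by
    intro w
    rw [amat_transpose A w, amat_transpose (fun k => (A k)ᵀ) w]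
    simp
  simp_rw [key]
  exact integrable_entry _ _ h1 h2 i j


lemma psd_trace_nonneg {d : ℕ} {C : Matrix (Fin d) (Fin d) ℝ} (hC : C.PosSemidef) :
    0 ≤ C.trace := by
  refine Finset.sum_nonneg fun i _ => ?_
  have := hC.dotProduct_mulVec_nonneg (Pi.single i 1)
  simpa [Matrix.mulVec_single, dotProduct, Pi.single_apply] using this

lemma trace_mul_nonneg {d : ℕ} {A B : Matrix (Fin d) (Fin d) ℝ}
    (hA : A.PosSemidef) (hB : B.PosSemidef) : 0 ≤ (A * B).trace := by
  open scoped MatrixOrder in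
  obtain ⟨R, rfl⟩ := CStarAlgebra.nonneg_iff_eq_star_mul_self.mp hA.nonneg
  rw [Matrix.trace_mul_cycle, Matrix.trace_mul_cycle, Matrix.star_eq_conjTranspose]
  exact psd_trace_nonneg (hB.mul_mul_conjTranspose_same _)

-- quadratic form: trace representation
lemma qform_eq_trace {d : ℕ} (S : Matrix (Fin d) (Fin d) ℝ) (x : Fin d → ℝ) :
    x ⬝ᵥ S *ᵥ x = (Matrix.vecMulVec x x * S).trace := by
  simp only [Matrix.trace, Matrix.diag, Matrix.mul_apply, Matrix.vecMulVec_apply,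
    dotProduct, Matrix.mulVec, Finset.mul_sum]
  rw [Finset.sum_comm]
  exact Finset.sum_congr rfl fun i _ => Finset.sum_congr rfl fun j _ => by ring

lemma scale_ineq {d : ℕ} (S : Matrix (Fin d) (Fin d) ℝ) (c : ℝ)
    (h : ∀ x : Fin d → ℝ, (∑ i, x i ^ 2) = 1 → c ≤ x ⬝ᵥ S *ᵥ x) (x : Fin d → ℝ) :
    c * ∑ i, x i ^ 2 ≤ x ⬝ᵥ S *ᵥ x := by
  rcases eq_or_ne (∑ i, x i ^ 2) 0 with h0 | h0
  · have hx : x = 0 := by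
      funext i
      have := (Finset.sum_eq_zero_iff_of_nonneg (fun i _ => sq_nonneg (x i))).1 h0 i
        (Finset.mem_univ i)
      exact pow_eq_zero_iff (by norm_num) |>.1 this
    simp [hx, h0]
  · have hpos : 0 < ∑ i, x i ^ 2 :=
      lt_of_le_of_ne (Finset.sum_nonneg fun i _ => sq_nonneg (x i)) (Ne.symm h0)
    set r : ℝ := Real.sqrt (∑ i, x i ^ 2) with hr
    have hrpos : 0 < r := Real.sqrt_pos.2 hpos
    have hr2 : r ^ 2 = ∑ i, x i ^ 2 := Real.sq_sqrt hpos.le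
    have hu : (∑ i, (r⁻¹ • x) i ^ 2) = 1 := by
      simp only [Pi.smul_apply, smul_eq_mul, mul_pow, ← Finset.mul_sum]
      rw [← hr2]
      field_simp
    have hkey := h (r⁻¹ • x) hu
    have hq : (r⁻¹ • x) ⬝ᵥ S *ᵥ (r⁻¹ • x) = r⁻¹ * (r⁻¹ * (x ⬝ᵥ S *ᵥ x)) := by
      rw [Matrix.mulVec_smul, smul_dotProduct, dotProduct_smul]
      simp [smul_eq_mul]
    rw [hq] at hkey
    have h2 : c * r ^ 2 ≤ x ⬝ᵥ S *ᵥ x := by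
      have := mul_le_mul_of_nonneg_left hkey (sq_nonneg r)
      calc c * r ^ 2 = r ^ 2 * c := by ring
        _ ≤ r ^ 2 * (r⁻¹ * (r⁻¹ * (x ⬝ᵥ S *ᵥ x))) := this
        _ = x ⬝ᵥ S *ᵥ x := by field_simp
    rwa [hr2] at h2


lemma trace_mul_integral_entry {n d : ℕ} {ν : Measure (Fin n → ℝ)}
    (f : (Fin n → ℝ) → Matrix (Fin d) (Fin d) ℝ)
    (hf : ∀ i j, Integrable (fun w => f w i j) ν) (C : Matrix (Fin d) (Fin d) ℝ) :
    (C * Matrix.of fun i j => ∫ w, f w i j ∂ν).trace = ∫ w, (C * f w).trace ∂ν := by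
  simp only [Matrix.trace, Matrix.diag, Matrix.mul_apply, Matrix.of_apply]
  calc ∑ i, ∑ j, C i j * ∫ w, f w j i ∂ν
      = ∑ i, ∑ j, ∫ w, C i j * f w j i ∂ν := by
        exact Finset.sum_congr rfl fun i _ => Finset.sum_congr rfl fun j _ =>
          (MeasureTheory.integral_const_mul _ _).symm
    _ = ∑ i, ∫ w, ∑ j, C i j * f w j i ∂ν := by
        exact Finset.sum_congr rfl fun i _ =>
          (integral_finset_sum _ fun j _ => (hf j i).const_mul _).symm
    _ = ∫ w, ∑ i, ∑ j, C i j * f w j i ∂ν := by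
        exact (integral_finset_sum _ fun i _ =>
          integrable_finset_sum _ fun j _ => (hf j i).const_mul _).symm

lemma qform_integral_entry {n d : ℕ} {ν : Measure (Fin n → ℝ)}
    (f : (Fin n → ℝ) → Matrix (Fin d) (Fin d) ℝ)
    (hf : ∀ i j, Integrable (fun w => f w i j) ν) (x : Fin d → ℝ) :
    x ⬝ᵥ (Matrix.of fun i j => ∫ w, f w i j ∂ν) *ᵥ x = ∫ w, x ⬝ᵥ f w *ᵥ x ∂ν := by
  rw [qform_eq_trace, trace_mul_integral_entry f hf]
  simp_rw [qform_eq_trace]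

lemma herm_integral_entry {n d : ℕ} {ν : Measure (Fin n → ℝ)}
    (f : (Fin n → ℝ) → Matrix (Fin d) (Fin d) ℝ)
    (hsym : ∀ w, (f w).IsHermitian) :
    (Matrix.of fun i j => ∫ w, f w i j ∂ν).IsHermitian := by
  refine Matrix.ext fun i j => ?_
  simp only [Matrix.conjTranspose_apply, Matrix.of_apply, star_trivial]
  refine integral_congr_ae (Eventually.of_forall fun w => ?_)
  have := (hsym w).apply j i
  simpa using this.symm

lemma posSemidef_vecMulVec {d : ℕ} (x : Fin d → ℝ) : (Matrix.vecMulVec x x).PosSemidef := by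
  refine PosSemidef.of_dotProduct_mulVec_nonneg ?_ ?_
  · rw [Matrix.IsHermitian, Matrix.conjTranspose_eq_transpose_of_trivial]
    refine Matrix.ext fun i j => ?_
    simp [Matrix.vecMulVec_apply, mul_comm]
  · intro y
    have : y ⬝ᵥ Matrix.vecMulVec x x *ᵥ y = (x ⬝ᵥ y) * (x ⬝ᵥ y) := by
      simp only [dotProduct, Matrix.mulVec, Matrix.vecMulVec_apply, Finset.sum_mul,
        Finset.mul_sum]
      rw [Finset.sum_comm]
      exact Finset.sum_congr rfl fun i _ => Finset.sum_congr rfl fun j _ => by ring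
    simpa [this] using mul_self_nonneg (x ⬝ᵥ y)


/-- Second-moment matrices of the autonomous system `x_{k+1} = M(w_k) x_k` driven by i.i.d.
disturbances `w_k ∼ ν`. -/
def Sseq {n d : ℕ} (ν : Measure (Fin n → ℝ))
    (M : (Fin n → ℝ) → Matrix (Fin d) (Fin d) ℝ) (x₀ : Fin d → ℝ) :
    ℕ → Matrix (Fin d) (Fin d) ℝ
  | 0 => Matrix.vecMulVec x₀ x₀
  | k + 1 => Matrix.of fun i j => ∫ w, (M w * Sseq ν M x₀ k * (M w)ᵀ) i j ∂ν

/-- Exponential mean square stability. -/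
def EMSS {n d : ℕ} (ν : Measure (Fin n → ℝ))
    (M : (Fin n → ℝ) → Matrix (Fin d) (Fin d) ℝ) : Prop :=
  ∃ c > (0 : ℝ), ∃ γ ∈ Set.Ioo (0 : ℝ) 1, ∀ (x₀ : Fin d → ℝ) (k : ℕ),
    (Sseq ν M x₀ k).trace ≤ c * γ ^ k * ∑ i, x₀ i ^ 2

theorem lyap_emss {n d : ℕ} (A : Fin (n + 1) → Matrix (Fin d) (Fin d) ℝ)
    (ν : Measure (Fin n → ℝ)) [IsProbabilityMeasure ν]
    (h1 : ∀ i, Integrable (fun w : Fin n → ℝ => w i) ν)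
    (h2 : ∀ i j, Integrable (fun w : Fin n → ℝ => w i * w j) ν)
    (P : Matrix (Fin d) (Fin d) ℝ) (hP : P.PosDef)
    (hL : (P - Matrix.of fun i j =>
        ∫ w, ((Amat A w)ᵀ * P * Amat A w) i j ∂ν).PosDef) :
    EMSS ν (Amat A) := by
  obtain rfl | hd0 := Nat.eq_zero_or_pos d
  · refine ⟨1, one_pos, 1/2, ⟨by norm_num, by norm_num⟩, fun x₀ k => ?_⟩
    have h0 : (Sseq ν (Amat A) x₀ k).trace = 0 := by
      simp [Matrix.trace]
    rw [h0]
    have : (∑ i : Fin 0, x₀ i ^ 2) = 0 := by simp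
    rw [this]
    norm_num
  set L : Matrix (Fin d) (Fin d) ℝ :=
    Matrix.of fun i j => ∫ w, ((Amat A w)ᵀ * P * Amat A w) i j ∂ν with hLdef
  -- transposes
  have hPt : Pᵀ = P := by
    rw [← Matrix.conjTranspose_eq_transpose_of_trivial]; exact hP.1
  have hLherm : L.IsHermitian := by
    refine herm_integral_entry _ fun w => ?_
    rw [← Matrix.conjTranspose_eq_transpose_of_trivial]
    exact Matrix.isHermitian_conjTranspose_mul_mul _ hP.1
  have hLt : Lᵀ = L := by
    rw [← Matrix.conjTranspose_eq_transpose_of_trivial]; exact hLherm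
  -- positive semidefiniteness of the second-moment sequence
  have hPSD : ∀ (x₀ : Fin d → ℝ) (k : ℕ), (Sseq ν (Amat A) x₀ k).PosSemidef := by
    intro x₀ k
    induction k with
    | zero => exact posSemidef_vecMulVec x₀
    | succ k ih =>
      have hw : ∀ w : Fin n → ℝ,
          (Amat A w * Sseq ν (Amat A) x₀ k * (Amat A w)ᵀ).PosSemidef := by
        intro w
        have := ih.mul_mul_conjTranspose_same (Amat A w)
        rwa [Matrix.conjTranspose_eq_transpose_of_trivial] at this
      refine PosSemidef.of_dotProduct_mulVec_nonneg ?_ ?_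
      · exact herm_integral_entry _ fun w => (hw w).isHermitian
      · intro y
        have hsy : star y = y := star_trivial y
        rw [hsy]
        show (0:ℝ) ≤ y ⬝ᵥ (Matrix.of fun i j =>
          ∫ w, (Amat A w * Sseq ν (Amat A) x₀ k * (Amat A w)ᵀ) i j ∂ν) *ᵥ y
        rw [qform_integral_entry _ (integrable_entry A _ h1 h2) y]
        refine integral_nonneg fun w => ?_
        have := (hw w).dotProduct_mulVec_nonneg y
        rwa [star_trivial] at this
  -- continuity of quadratic forms
  have hcont : ∀ S : Matrix (Fin d) (Fin d) ℝ,
      Continuous fun x : Fin d → ℝ => x ⬝ᵥ S *ᵥ x := by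
    intro S
    have : (fun x : Fin d → ℝ => x ⬝ᵥ S *ᵥ x)
        = fun x => ∑ i, x i * ∑ j, S i j * x j := by
      funext x; simp [dotProduct, Matrix.mulVec]
    rw [this]
    exact continuous_finset_sum _ fun i _ => (continuous_apply i).mul
      (continuous_finset_sum _ fun j _ => continuous_const.mul (continuous_apply j))
  -- the "sphere"
  set sph : Set (Fin d → ℝ) := {x | ∑ i, x i ^ 2 = 1} with hsph
  have hsph_compact : IsCompact sph := by
    have hclosed : IsClosed sph :=
      isClosed_eq (continuous_finset_sum _ fun i _ => (continuous_apply i).pow 2)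
        continuous_const
    refine (isCompact_closedBall (0 : Fin d → ℝ) 1).of_isClosed_subset hclosed ?_
    intro x hx
    rw [Metric.mem_closedBall, dist_zero_right]
    rw [pi_norm_le_iff_of_nonneg zero_le_one]
    intro i
    have hle : x i ^ 2 ≤ 1 := by
      rw [← hx]
      exact Finset.single_le_sum (fun i _ => sq_nonneg (x i)) (Finset.mem_univ i)
    rw [Real.norm_eq_abs]
    nlinarith [abs_nonneg (x i), sq_abs (x i)]
  have hsph_ne : sph.Nonempty := by
    set v : Fin d → ℝ := fun j => if j = (⟨0, hd0⟩ : Fin d) then 1 else 0 with hv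
    have hmem : (∑ i, v i ^ 2) = 1 := by
      rw [Finset.sum_eq_single (⟨0, hd0⟩ : Fin d)]
      · simp [hv]
      · intro b _ hb; simp [hv, hb]
      · intro h; exact absurd (Finset.mem_univ _) h
    exact ⟨v, hmem⟩
  have hsph_ne_old : True := by
    rw [show True = True from rfl]
    trivial
  have hne_of_sph : ∀ x ∈ sph, x ≠ 0 := by
    intro x hx h0
    rw [h0] at hx
    simp [hsph] at hx
  -- constants
  obtain ⟨u₁, hu₁, hmin₁⟩ := hsph_compact.exists_isMinOn hsph_ne (hcont P).continuousOn
  obtain ⟨u₂, hu₂, hmax₂⟩ := hsph_compact.exists_isMaxOn hsph_ne (hcont P).continuousOn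
  obtain ⟨u₃, hu₃, hmin₃⟩ := hsph_compact.exists_isMinOn hsph_ne (hcont (P - L)).continuousOn
  set c₁ : ℝ := u₁ ⬝ᵥ P *ᵥ u₁ with hc₁
  set c₂ : ℝ := u₂ ⬝ᵥ P *ᵥ u₂ with hc₂
  set m : ℝ := u₃ ⬝ᵥ (P - L) *ᵥ u₃ with hm
  have hc₁pos : 0 < c₁ := by
    have := hP.dotProduct_mulVec_pos (hne_of_sph u₁ hu₁)
    rwa [star_trivial] at this
  have hc₂pos : 0 < c₂ := by
    have := hP.dotProduct_mulVec_pos (hne_of_sph u₂ hu₂)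
    rwa [star_trivial] at this
  have hmpos : 0 < m := by
    have := hL.dotProduct_mulVec_pos (hne_of_sph u₃ hu₃)
    rwa [star_trivial] at this
  have hPlow : ∀ x : Fin d → ℝ, c₁ * ∑ i, x i ^ 2 ≤ x ⬝ᵥ P *ᵥ x :=
    scale_ineq P c₁ fun x hx => isMinOn_iff.mp hmin₁ x hx
  have hDlow : ∀ x : Fin d → ℝ, m * ∑ i, x i ^ 2 ≤ x ⬝ᵥ (P - L) *ᵥ x :=
    scale_ineq (P - L) m fun x hx => isMinOn_iff.mp hmin₃ x hx
  have hPhigh : ∀ x : Fin d → ℝ, x ⬝ᵥ P *ᵥ x ≤ c₂ * ∑ i, x i ^ 2 := by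
    have hneg : ∀ x : Fin d → ℝ, x ⬝ᵥ (-P) *ᵥ x = -(x ⬝ᵥ P *ᵥ x) := by
      intro x; rw [Matrix.neg_mulVec, dotProduct_neg]
    have := scale_ineq (-P) (-c₂) fun x hx => by
      rw [hneg x]
      have := isMaxOn_iff.mp hmax₂ x hx
      linarith
    intro x
    have h := this x
    rw [hneg x] at h
    linarith
  -- the contraction factor
  set δ : ℝ := min (m / c₂) (1/2) with hδ
  have hδpos : 0 < δ := lt_min (div_pos hmpos hc₂pos) (by norm_num)
  have hδle : δ * c₂ ≤ m := by
    have h1' : δ ≤ m / c₂ := min_le_left _ _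
    rwa [le_div_iff₀ hc₂pos] at h1'
  set γ : ℝ := 1 - δ with hγdef
  have hγpos : 0 < γ := by
    have : δ ≤ 1/2 := min_le_right _ _
    simp only [hγdef]; linarith
  have hγlt1 : γ < 1 := by simp only [hγdef]; linarith
  -- γ•P - L is PSD
  have hγP : (γ • P - L).PosSemidef := by
    refine PosSemidef.of_dotProduct_mulVec_nonneg ?_ ?_
    · rw [Matrix.IsHermitian, Matrix.conjTranspose_eq_transpose_of_trivial,
        Matrix.transpose_sub, Matrix.transpose_smul, hPt, hLt]
    · intro y
      rw [star_trivial]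
      have hexp : y ⬝ᵥ (γ • P - L) *ᵥ y
          = γ * (y ⬝ᵥ P *ᵥ y) - y ⬝ᵥ L *ᵥ y := by
        rw [Matrix.sub_mulVec, dotProduct_sub, Matrix.smul_mulVec,
          dotProduct_smul, smul_eq_mul]
      have hQL : y ⬝ᵥ L *ᵥ y = y ⬝ᵥ P *ᵥ y - y ⬝ᵥ (P - L) *ᵥ y := by
        rw [Matrix.sub_mulVec, dotProduct_sub]; ring
      have hs : (0:ℝ) ≤ ∑ i, y i ^ 2 := Finset.sum_nonneg fun i _ => sq_nonneg _
      have hh1 : 0 ≤ δ * (c₂ * (∑ i, y i ^ 2) - y ⬝ᵥ P *ᵥ y) :=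
        mul_nonneg hδpos.le (by linarith [hPhigh y])
      have hh2 : 0 ≤ (m - δ * c₂) * ∑ i, y i ^ 2 :=
        mul_nonneg (by linarith) hs
      rw [hexp, hQL]
      have := hDlow y
      simp only [hγdef]
      nlinarith [hDlow y]
  -- P - c₁ • 1 is PSD
  have hP1 : (P - c₁ • (1 : Matrix (Fin d) (Fin d) ℝ)).PosSemidef := by
    refine PosSemidef.of_dotProduct_mulVec_nonneg ?_ ?_
    · rw [Matrix.IsHermitian, Matrix.conjTranspose_eq_transpose_of_trivial,
        Matrix.transpose_sub, Matrix.transpose_smul, Matrix.transpose_one, hPt]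
    · intro y
      rw [star_trivial]
      have hexp : y ⬝ᵥ (P - c₁ • (1 : Matrix (Fin d) (Fin d) ℝ)) *ᵥ y
          = y ⬝ᵥ P *ᵥ y - c₁ * (y ⬝ᵥ y) := by
        rw [Matrix.sub_mulVec, dotProduct_sub, Matrix.smul_mulVec,
          Matrix.one_mulVec, dotProduct_smul, smul_eq_mul]
      have hyy : y ⬝ᵥ y = ∑ i, y i ^ 2 := by
        simp [dotProduct, sq]
      rw [hexp, hyy]
      linarith [hPlow y]
  -- the trace recursion
  have hrec : ∀ (x₀ : Fin d → ℝ) (k : ℕ),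
      (P * Sseq ν (Amat A) x₀ (k+1)).trace = (L * Sseq ν (Amat A) x₀ k).trace := by
    intro x₀ k
    have e1 : (P * Sseq ν (Amat A) x₀ (k+1)).trace
        = ∫ w, (P * (Amat A w * Sseq ν (Amat A) x₀ k * (Amat A w)ᵀ)).trace ∂ν := by
      show (P * Matrix.of fun i j =>
        ∫ w, (Amat A w * Sseq ν (Amat A) x₀ k * (Amat A w)ᵀ) i j ∂ν).trace = _
      exact trace_mul_integral_entry _ (integrable_entry A _ h1 h2) P
    have e2 : (L * Sseq ν (Amat A) x₀ k).trace
        = ∫ w, (((Amat A w)ᵀ * P * Amat A w) * Sseq ν (Amat A) x₀ k).trace ∂ν := by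
      rw [Matrix.trace_mul_comm]
      rw [hLdef, trace_mul_integral_entry _ (integrable_entry' A P h1 h2)
        (Sseq ν (Amat A) x₀ k)]
      exact integral_congr_ae (Eventually.of_forall fun w =>
        Matrix.trace_mul_comm _ _)
    rw [e1, e2]
    refine integral_congr_ae (Eventually.of_forall fun w => ?_)
    dsimp only
    have ha : P * (Amat A w * Sseq ν (Amat A) x₀ k * (Amat A w)ᵀ)
        = (P * Amat A w * Sseq ν (Amat A) x₀ k) * (Amat A w)ᵀ := by
      simp [mul_assoc]
    have hb : (Amat A w)ᵀ * (P * Amat A w * Sseq ν (Amat A) x₀ k)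
        = ((Amat A w)ᵀ * P * Amat A w) * Sseq ν (Amat A) x₀ k := by
      simp [mul_assoc]
    rw [ha, Matrix.trace_mul_comm, hb]
  -- the one-step contraction
  have hstep : ∀ (x₀ : Fin d → ℝ) (k : ℕ),
      (P * Sseq ν (Amat A) x₀ (k+1)).trace ≤ γ * (P * Sseq ν (Amat A) x₀ k).trace := by
    intro x₀ k
    have h0 : 0 ≤ ((γ • P - L) * Sseq ν (Amat A) x₀ k).trace :=
      trace_mul_nonneg hγP (hPSD x₀ k)
    have hexp : ((γ • P - L) * Sseq ν (Amat A) x₀ k).trace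
        = γ * (P * Sseq ν (Amat A) x₀ k).trace - (L * Sseq ν (Amat A) x₀ k).trace := by
      rw [Matrix.sub_mul, Matrix.trace_sub, Matrix.smul_mul, Matrix.trace_smul,
        smul_eq_mul]
    rw [hrec x₀ k]
    linarith [hexp ▸ h0]
  -- iterate
  have hiter : ∀ (x₀ : Fin d → ℝ) (k : ℕ),
      (P * Sseq ν (Amat A) x₀ k).trace ≤ γ ^ k * (P * Sseq ν (Amat A) x₀ 0).trace := by
    intro x₀ k
    induction k with
    | zero => simp
    | succ k ih =>
      calc (P * Sseq ν (Amat A) x₀ (k+1)).trace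
          ≤ γ * (P * Sseq ν (Amat A) x₀ k).trace := hstep x₀ k
        _ ≤ γ * (γ ^ k * (P * Sseq ν (Amat A) x₀ 0).trace) :=
            mul_le_mul_of_nonneg_left ih hγpos.le
        _ = γ ^ (k+1) * (P * Sseq ν (Amat A) x₀ 0).trace := by ring
  -- initial value bound
  have hV0 : ∀ x₀ : Fin d → ℝ,
      (P * Sseq ν (Amat A) x₀ 0).trace ≤ c₂ * ∑ i, x₀ i ^ 2 := by
    intro x₀
    have : (P * Sseq ν (Amat A) x₀ 0).trace = x₀ ⬝ᵥ P *ᵥ x₀ := by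
      show (P * Matrix.vecMulVec x₀ x₀).trace = _
      rw [Matrix.trace_mul_comm, ← qform_eq_trace]
    rw [this]
    exact hPhigh x₀
  -- lower trace bound
  have htr : ∀ (x₀ : Fin d → ℝ) (k : ℕ),
      c₁ * (Sseq ν (Amat A) x₀ k).trace ≤ (P * Sseq ν (Amat A) x₀ k).trace := by
    intro x₀ k
    have h0 : 0 ≤ ((P - c₁ • (1 : Matrix (Fin d) (Fin d) ℝ))
        * Sseq ν (Amat A) x₀ k).trace := trace_mul_nonneg hP1 (hPSD x₀ k)
    have hexp : ((P - c₁ • (1 : Matrix (Fin d) (Fin d) ℝ)) * Sseq ν (Amat A) x₀ k).trace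
        = (P * Sseq ν (Amat A) x₀ k).trace - c₁ * (Sseq ν (Amat A) x₀ k).trace := by
      rw [Matrix.sub_mul, Matrix.trace_sub, Matrix.smul_mul, Matrix.trace_smul,
        smul_eq_mul, Matrix.one_mul]
    linarith [hexp ▸ h0]
  -- conclusion
  refine ⟨c₂ / c₁, div_pos hc₂pos hc₁pos, γ, ⟨hγpos, hγlt1⟩, fun x₀ k => ?_⟩
  have hchain : c₁ * (Sseq ν (Amat A) x₀ k).trace ≤ γ ^ k * (c₂ * ∑ i, x₀ i ^ 2) :=
    calc c₁ * (Sseq ν (Amat A) x₀ k).trace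
        ≤ (P * Sseq ν (Amat A) x₀ k).trace := htr x₀ k
      _ ≤ γ ^ k * (P * Sseq ν (Amat A) x₀ 0).trace := hiter x₀ k
      _ ≤ γ ^ k * (c₂ * ∑ i, x₀ i ^ 2) :=
          mul_le_mul_of_nonneg_left (hV0 x₀) (pow_nonneg hγpos.le k)
  rw [div_mul_eq_mul_div, div_mul_eq_mul_div, le_div_iff₀ hc₁pos]
  calc (Sseq ν (Amat A) x₀ k).trace * c₁
      = c₁ * (Sseq ν (Amat A) x₀ k).trace := by ring
    _ ≤ γ ^ k * (c₂ * ∑ i, x₀ i ^ 2) := hchain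
    _ = c₂ * γ ^ k * ∑ i, x₀ i ^ 2 := by ring


/-- distributionally robust Lyapunov stability. If, for every `ω`, every
distribution `ν'` in the ambiguity set `𝒜(ω)` admits `P̂(ω) ≻ 0` as a Lyapunov certificate,
and `ν ∈ 𝒜(ω)` holds with probability at least `1 − β`, then the system driven by `ν` is
exponentially mean square stable with probability at least `1 − β`. -/
theorem stmt2 {n d : ℕ} {Ω : Type*} [MeasurableSpace Ω]
    (Pr : Measure Ω) [IsProbabilityMeasure Pr]
    (A : Fin (n + 1) → Matrix (Fin d) (Fin d) ℝ)
    (ν : Measure (Fin n → ℝ)) [IsProbabilityMeasure ν]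
    (hint1 : ∀ i, Integrable (fun w : Fin n → ℝ => w i) ν)
    (hint2 : ∀ i j, Integrable (fun w : Fin n → ℝ => w i * w j) ν)
    (𝒜 : Ω → Set (Measure (Fin n → ℝ)))
    (Phat : Ω → Matrix (Fin d) (Fin d) ℝ)
    (hamb : ∀ ω, ∀ ν' ∈ 𝒜 ω, IsProbabilityMeasure ν' ∧
      (∀ i, Integrable (fun w : Fin n → ℝ => w i) ν') ∧
      (∀ i j, Integrable (fun w : Fin n → ℝ => w i * w j) ν'))
    (hPD : ∀ ω, (Phat ω).PosDef)
    (hLyap : ∀ ω, ∀ ν' ∈ 𝒜 ω,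
      (Phat ω - Matrix.of fun i j =>
        ∫ w, ((Amat A w)ᵀ * Phat ω * Amat A w) i j ∂ν').PosDef)
    (β : ℝ) (hβ : β ∈ Set.Icc (0 : ℝ) 1)
    (hmeas : MeasurableSet {ω | ν ∈ 𝒜 ω})
    (hprob : ENNReal.ofReal (1 - β) ≤ Pr {ω | ν ∈ 𝒜 ω}) :
    ENNReal.ofReal (1 - β) ≤ Pr {ω | EMSS ν (Amat A)} := by
  by_cases hβ1 : 1 ≤ β
  · have h0 : ENNReal.ofReal (1 - β) = 0 := by
      rw [ENNReal.ofReal_eq_zero]; linarith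
    rw [h0]
    exact zero_le
  · push_neg at hβ1
    have hpos : (0 : ENNReal) < Pr {ω | ν ∈ 𝒜 ω} := by
      refine lt_of_lt_of_le ?_ hprob
      rw [ENNReal.ofReal_pos]
      linarith
    have hne : {ω | ν ∈ 𝒜 ω}.Nonempty := by
      by_contra h
      rw [Set.not_nonempty_iff_eq_empty] at h
      rw [h] at hpos
      simp at hpos
    obtain ⟨ω₀, hω₀⟩ := hne
    have hEMSS : EMSS ν (Amat A) :=
      lyap_emss A ν hint1 hint2 (Phat ω₀) (hPD ω₀) (hLyap ω₀ ν hω₀)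
    have huniv : {ω : Ω | EMSS ν (Amat A)} = Set.univ :=
      Set.eq_univ_of_forall fun ω => hEMSS
    rw [huniv, measure_univ]
    rw [show (1 : ENNReal) = ENNReal.ofReal 1 by simp]
    exact ENNReal.ofReal_le_ofReal (by linarith [hβ.1])

end
end

section
/- Fix x ∈ ℝ^d, u ∈ ℝ^m, a symmetric positive semidefinite P ∈ ℝ^{d×d}, a vector μ ∈ ℝⁿ and a symmetric positive semidefinite matrix Σ_dr ∈ ℝ^{n×n}. Then the supremum, over all probability measures ν' on ℝⁿ with finite second moments, mean μ, and covariance Σ' ⪯ Σ_dr, of ∫ (A(w)x + B(w)u)ᵀ P (A(w)x + B(w)u) dν'(w) equals (A(μ)x + B(μ)u)ᵀ P (A(μ)x + B(μ)u) + (Āx + B̄u)ᵀ (Σ_dr ⊗ P) (Āx + B̄u), where Ā is the vertical stacking of A₁, …, Aₙ and B̄ the vertical stacking of B₁, …, Bₙ; moreover the supremum is attained (e.g. by the Gaussian measure with mean μ and covariance Σ_dr). -/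
open MeasureTheory Matrix
open scoped Kronecker ENNReal MatrixOrder

noncomputable section

/-- `B(w) = B₀ + Σᵢ w⁽ⁱ⁾ Bᵢ`. -/
def Bmat {n d m : ℕ} (B : Fin (n + 1) → Matrix (Fin d) (Fin m) ℝ) (w : Fin n → ℝ) :
    Matrix (Fin d) (Fin m) ℝ :=
  B 0 + ∑ i : Fin n, w i • B i.succ

/-- `Ā`: the `(nd) × d` vertical stacking of `A₁, …, Aₙ` (without `A₀`). -/
def AbarTail {n d : ℕ} (A : Fin (n + 1) → Matrix (Fin d) (Fin d) ℝ) :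
    Matrix (Fin n × Fin d) (Fin d) ℝ :=
  Matrix.of fun p j => A p.1.succ p.2 j

/-- `B̄`: the `(nd) × m` vertical stacking of `B₁, …, Bₙ` (without `B₀`). -/
def BbarTail {n d m : ℕ} (B : Fin (n + 1) → Matrix (Fin d) (Fin m) ℝ) :
    Matrix (Fin n × Fin d) (Fin m) ℝ :=
  Matrix.of fun p j => B p.1.succ p.2 j


namespace Stmt8Aux

variable {n d m : ℕ}

lemma sum_dotProduct' {ι : Type*} (s : Finset ι) (f : ι → Fin d → ℝ) (y : Fin d → ℝ) :
    (∑ i ∈ s, f i) ⬝ᵥ y = ∑ i ∈ s, f i ⬝ᵥ y := by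
  simp only [dotProduct, Finset.sum_apply, Finset.sum_mul]
  exact Finset.sum_comm

lemma dotProduct_sum' {ι : Type*} (s : Finset ι) (y : Fin d → ℝ) (f : ι → Fin d → ℝ) :
    y ⬝ᵥ (∑ i ∈ s, f i) = ∑ i ∈ s, y ⬝ᵥ f i := by
  simp only [dotProduct, Finset.sum_apply, Finset.mul_sum]
  exact Finset.sum_comm

lemma mulVec_sum' {ι : Type*} (s : Finset ι) (P : Matrix (Fin d) (Fin d) ℝ) (f : ι → Fin d → ℝ) :
    P *ᵥ (∑ i ∈ s, f i) = ∑ i ∈ s, P *ᵥ f i := by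
  ext k
  simp only [Matrix.mulVec, dotProduct, Finset.sum_apply, Finset.mul_sum]
  exact Finset.sum_comm

lemma sum_mulVec'' {ι d' : Type*} [Fintype d'] (s : Finset ι) (f : ι → Matrix (Fin d) d' ℝ)
    (x : d' → ℝ) : (∑ i ∈ s, f i) *ᵥ x = ∑ i ∈ s, f i *ᵥ x := by
  ext k
  simp only [Matrix.mulVec, dotProduct, Finset.sum_apply, Matrix.sum_apply, Finset.sum_mul]
  exact Finset.sum_comm

lemma quad_expand (P : Matrix (Fin d) (Fin d) ℝ) (c : Fin d → ℝ) (z : Fin n → Fin d → ℝ)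
    (w : Fin n → ℝ) :
    (c + ∑ i, w i • z i) ⬝ᵥ P *ᵥ (c + ∑ i, w i • z i)
      = c ⬝ᵥ P *ᵥ c + ∑ i, w i * (c ⬝ᵥ P *ᵥ z i + z i ⬝ᵥ P *ᵥ c)
        + ∑ i, ∑ j, w i * w j * (z i ⬝ᵥ P *ᵥ z j) := by
  rw [Matrix.mulVec_add, dotProduct_add, add_dotProduct, add_dotProduct]
  rw [mulVec_sum', dotProduct_sum', sum_dotProduct', dotProduct_sum']
  simp only [Matrix.mulVec_smul, dotProduct_smul, smul_dotProduct, smul_eq_mul,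
    sum_dotProduct', Finset.mul_sum, smul_dotProduct]
  have h : ∑ i : Fin n, ∑ j : Fin n, w i * (w j * z j ⬝ᵥ P *ᵥ z i)
      = ∑ i : Fin n, ∑ j : Fin n, w i * w j * (z i ⬝ᵥ P *ᵥ z j) := by
    rw [Finset.sum_comm]
    exact Finset.sum_congr rfl fun i _ => Finset.sum_congr rfl fun j _ => by ring
  rw [h]
  simp only [mul_add, Finset.sum_add_distrib]
  ring

lemma bilin_sum (P : Matrix (Fin d) (Fin d) ℝ) (a : Fin n → ℝ) (z : Fin n → Fin d → ℝ) :
    (∑ i, a i • z i) ⬝ᵥ P *ᵥ (∑ j, a j • z j) = ∑ i, ∑ j, a i * a j * (z i ⬝ᵥ P *ᵥ z j) := by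
  have := quad_expand P 0 z a
  simpa using this

lemma pairing_nonneg (T : Matrix (Fin n) (Fin n) ℝ) (hT : T.PosSemidef)
    (P : Matrix (Fin d) (Fin d) ℝ) (hP : P.PosSemidef) (z : Fin n → Fin d → ℝ) :
    0 ≤ ∑ i, ∑ j, T i j * (z i ⬝ᵥ P *ᵥ z j) := by
  set R := CFC.sqrt T with hR
  have hsym : ∀ i k, R i k = R k i := fun i k => by
    have h := (CFC.sqrt_nonneg T).posSemidef.1
    simpa using congrFun (congrFun h i) k |>.symm
  have hT' : ∀ i j, T i j = ∑ k, R k i * R k j := fun i j => by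
    conv_lhs => rw [← CFC.sqrt_mul_sqrt_self T hT.nonneg]
    rw [Matrix.mul_apply]
    exact Finset.sum_congr rfl fun k _ => by rw [← hR, hsym i k]
  have key : ∑ i, ∑ j, T i j * (z i ⬝ᵥ P *ᵥ z j)
      = ∑ k, ((∑ i, R k i • z i) ⬝ᵥ P *ᵥ (∑ j, R k j • z j)) := by
    simp_rw [bilin_sum]
    conv_rhs => rw [Finset.sum_comm]
    refine Finset.sum_congr rfl fun i _ => ?_
    conv_rhs => rw [Finset.sum_comm]
    refine Finset.sum_congr rfl fun j _ => ?_
    rw [hT' i j, Finset.sum_mul]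
  rw [key]
  refine Finset.sum_nonneg fun k _ => ?_
  simpa using hP.dotProduct_mulVec_nonneg (∑ i, R k i • z i)

def cvec (A : Fin (n + 1) → Matrix (Fin d) (Fin d) ℝ) (B : Fin (n + 1) → Matrix (Fin d) (Fin m) ℝ)
    (x : Fin d → ℝ) (u : Fin m → ℝ) : Fin d → ℝ := A 0 *ᵥ x + B 0 *ᵥ u

def zvec (A : Fin (n + 1) → Matrix (Fin d) (Fin d) ℝ) (B : Fin (n + 1) → Matrix (Fin d) (Fin m) ℝ)
    (x : Fin d → ℝ) (u : Fin m → ℝ) (i : Fin n) : Fin d → ℝ := A i.succ *ᵥ x + B i.succ *ᵥ u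

lemma vec_eq (A : Fin (n + 1) → Matrix (Fin d) (Fin d) ℝ) (B : Fin (n + 1) → Matrix (Fin d) (Fin m) ℝ)
    (x : Fin d → ℝ) (u : Fin m → ℝ) (w : Fin n → ℝ) :
    Amat A w *ᵥ x + Bmat B w *ᵥ u = cvec A B x u + ∑ i, w i • zvec A B x u i := by
  ext k
  simp [Amat, Bmat, cvec, zvec, Matrix.add_mulVec, Matrix.smul_mulVec, smul_add,
    Finset.sum_add_distrib, sum_mulVec'']
  abel

lemma bar_vec_eq (A : Fin (n + 1) → Matrix (Fin d) (Fin d) ℝ)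
    (B : Fin (n + 1) → Matrix (Fin d) (Fin m) ℝ) (x : Fin d → ℝ) (u : Fin m → ℝ) :
    AbarTail A *ᵥ x + BbarTail B *ᵥ u = fun p => zvec A B x u p.1 p.2 := by
  ext p
  simp [AbarTail, BbarTail, zvec, Matrix.mulVec, dotProduct]

lemma kron_quad (S : Matrix (Fin n) (Fin n) ℝ) (P : Matrix (Fin d) (Fin d) ℝ)
    (z : Fin n → Fin d → ℝ) :
    (fun p : Fin n × Fin d => z p.1 p.2) ⬝ᵥ (S ⊗ₖ P) *ᵥ (fun p : Fin n × Fin d => z p.1 p.2)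
      = ∑ i, ∑ j, S i j * (z i ⬝ᵥ P *ᵥ z j) := by
  simp only [dotProduct, Matrix.mulVec, Matrix.kroneckerMap_apply, Fintype.sum_prod_type,
    Finset.mul_sum, Finset.sum_mul]
  refine Finset.sum_congr rfl fun i _ => ?_
  rw [Finset.sum_comm]
  exact Finset.sum_congr rfl fun j _ => Finset.sum_congr rfl fun k _ =>
    Finset.sum_congr rfl fun l _ => by ring

lemma cov_eq (ν' : Measure (Fin n → ℝ)) [IsProbabilityMeasure ν']
    (h1 : ∀ i, Integrable (fun w : Fin n → ℝ => w i) ν')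
    (h2 : ∀ i j, Integrable (fun w : Fin n → ℝ => w i * w j) ν')
    (μ : Fin n → ℝ) (hmean : ∀ i, (∫ w, w i ∂ν') = μ i) (i j : Fin n) :
    ∫ w, (w i - μ i) * (w j - μ j) ∂ν' = (∫ w, w i * w j ∂ν') - μ i * μ j := by
  have heq : (fun w : Fin n → ℝ => (w i - μ i) * (w j - μ j))
      = fun w => (w i * w j - (μ j * w i + μ i * w j)) + μ i * μ j := by funext w; ring
  have hsum : Integrable (fun w : Fin n → ℝ => μ j * w i + μ i * w j) ν' :=
    ((h1 i).const_mul (μ j)).add ((h1 j).const_mul (μ i))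
  have hsub : Integrable (fun w : Fin n → ℝ => w i * w j - (μ j * w i + μ i * w j)) ν' :=
    (h2 i j).sub hsum
  rw [heq, integral_add hsub (integrable_const _), integral_sub (h2 i j) hsum,
    integral_add ((h1 i).const_mul (μ j)) ((h1 j).const_mul (μ i)),
    integral_const_mul, integral_const_mul, integral_const, hmean i, hmean j]
  simp [measure_univ]
  ring

lemma integral_poly (ν' : Measure (Fin n → ℝ)) [IsProbabilityMeasure ν']
    (h1 : ∀ i, Integrable (fun w : Fin n → ℝ => w i) ν')
    (h2 : ∀ i j, Integrable (fun w : Fin n → ℝ => w i * w j) ν')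
    (a : ℝ) (b : Fin n → ℝ) (M : Fin n → Fin n → ℝ) :
    ∫ w, (a + ∑ i, w i * b i + ∑ i, ∑ j, w i * w j * M i j) ∂ν'
      = a + (∑ i, (∫ w, w i ∂ν') * b i) + ∑ i, ∑ j, (∫ w, w i * w j ∂ν') * M i j := by
  have hb : Integrable (fun w : Fin n → ℝ => ∑ i, w i * b i) ν' :=
    integrable_finset_sum _ fun i _ => (h1 i).mul_const _
  have hM : Integrable (fun w : Fin n → ℝ => ∑ i, ∑ j, w i * w j * M i j) ν' :=
    integrable_finset_sum _ fun i _ => integrable_finset_sum _ fun j _ => (h2 i j).mul_const _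
  have hab : Integrable (fun w : Fin n → ℝ => a + ∑ i, w i * b i) ν' :=
    (integrable_const a).add hb
  rw [integral_add hab hM, integral_add (integrable_const a) hb,
    integral_const, integral_finset_sum _ fun i _ => (h1 i).mul_const _,
    integral_finset_sum _ fun i _ => integrable_finset_sum _ fun j _ => (h2 i j).mul_const _]
  simp only [integral_mul_const, measure_univ, probReal_univ, ENNReal.toReal_one, smul_eq_mul, one_mul]
  congr 1
  exact Finset.sum_congr rfl fun i _ =>
    (integral_finset_sum _ fun j _ => (h2 i j).mul_const _).trans
      (Finset.sum_congr rfl fun j _ => integral_mul_const _ _)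

lemma integral_quad (ν' : Measure (Fin n → ℝ)) [IsProbabilityMeasure ν']
    (h1 : ∀ i, Integrable (fun w : Fin n → ℝ => w i) ν')
    (h2 : ∀ i j, Integrable (fun w : Fin n → ℝ => w i * w j) ν')
    (μ : Fin n → ℝ) (hmean : ∀ i, (∫ w, w i ∂ν') = μ i)
    (P : Matrix (Fin d) (Fin d) ℝ) (c : Fin d → ℝ) (z : Fin n → Fin d → ℝ) :
    ∫ w, ((c + ∑ i, w i • z i) ⬝ᵥ P *ᵥ (c + ∑ i, w i • z i)) ∂ν'
      = (c + ∑ i, μ i • z i) ⬝ᵥ P *ᵥ (c + ∑ i, μ i • z i)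
        + ∑ i, ∑ j, (∫ w, (w i - μ i) * (w j - μ j) ∂ν') * (z i ⬝ᵥ P *ᵥ z j) := by
  simp_rw [quad_expand]
  rw [integral_poly ν' h1 h2]
  simp_rw [hmean, cov_eq ν' h1 h2 μ hmean]
  simp only [sub_mul, Finset.sum_sub_distrib]
  ring

def atomMeas (μ : Fin n → ℝ) (s : Fin n → Fin n → ℝ) : Measure (Fin n → ℝ) :=
  ENNReal.ofReal ((n + 1 : ℝ))⁻¹ • Measure.dirac μ +
  ∑ k : Fin n, ENNReal.ofReal (2 * (n + 1 : ℝ))⁻¹ •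
    (Measure.dirac (μ + Real.sqrt (n + 1) • s k) + Measure.dirac (μ - Real.sqrt (n + 1) • s k))

lemma atom_prob (μ : Fin n → ℝ) (s : Fin n → Fin n → ℝ) :
    IsProbabilityMeasure (atomMeas μ s) := by
  constructor
  rw [atomMeas]
  simp [Measure.add_apply, Measure.smul_apply, measure_univ, Finset.sum_const, Finset.card_univ]
  rw [show ((n : ℝ≥0∞)) = ENNReal.ofReal n from (ENNReal.ofReal_natCast n).symm,
    ← ENNReal.ofReal_mul (by positivity), ← ENNReal.ofReal_add (by positivity) (by positivity),
    ← ENNReal.ofReal_add (by positivity) (by positivity), ← ENNReal.ofReal_one]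
  congr 1
  field_simp
  ring

lemma integrable_dirac' {α : Type*} [MeasurableSpace α] [MeasurableSingletonClass α]
    (f : α → ℝ) (a : α) : Integrable f (Measure.dirac a) :=
  (integrable_const (f a)).congr (MeasureTheory.ae_eq_dirac f).symm

lemma atom_integrable (μ : Fin n → ℝ) (s : Fin n → Fin n → ℝ) (f : (Fin n → ℝ) → ℝ) :
    Integrable f (atomMeas μ s) := by
  rw [atomMeas]
  refine Integrable.add_measure ?_ ?_
  · exact (integrable_dirac' f μ).smul_measure ENNReal.ofReal_ne_top
  · refine integrable_finset_sum_measure.2 fun k _ => ?_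
    exact (((integrable_dirac' f _).add_measure (integrable_dirac' f _))).smul_measure
      ENNReal.ofReal_ne_top

lemma atom_integral (μ : Fin n → ℝ) (s : Fin n → Fin n → ℝ) (f : (Fin n → ℝ) → ℝ) :
    ∫ w, f w ∂(atomMeas μ s)
      = (n + 1 : ℝ)⁻¹ * f μ + ∑ k, (2 * (n + 1 : ℝ))⁻¹ *
          (f (μ + Real.sqrt (n + 1) • s k) + f (μ - Real.sqrt (n + 1) • s k)) := by
  have hpos : (0:ℝ) ≤ (n + 1 : ℝ)⁻¹ := by positivity
  have hpos2 : (0:ℝ) ≤ (2 * (n + 1 : ℝ))⁻¹ := by positivity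
  rw [atomMeas, integral_add_measure
      ((integrable_dirac' f μ).smul_measure ENNReal.ofReal_ne_top)
      (integrable_finset_sum_measure.2 fun k _ =>
        (((integrable_dirac' f _).add_measure (integrable_dirac' f _))).smul_measure
          ENNReal.ofReal_ne_top),
    integral_smul_measure, integral_dirac,
    integral_finset_sum_measure (fun k _ =>
        (((integrable_dirac' f _).add_measure (integrable_dirac' f _))).smul_measure
          ENNReal.ofReal_ne_top)]
  congr 1
  · rw [ENNReal.toReal_ofReal hpos, smul_eq_mul]
  · refine Finset.sum_congr rfl fun k _ => ?_
    rw [integral_smul_measure, ENNReal.toReal_ofReal hpos2, smul_eq_mul,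
      integral_add_measure (integrable_dirac' f _) (integrable_dirac' f _),
      integral_dirac, integral_dirac]

lemma atom_mean (μ : Fin n → ℝ) (s : Fin n → Fin n → ℝ) (i : Fin n) :
    ∫ w, w i ∂(atomMeas μ s) = μ i := by
  rw [atom_integral μ s (fun w => w i)]
  simp only [Pi.add_apply, Pi.smul_apply, smul_eq_mul, Pi.sub_apply]
  have hne : (n + 1 : ℝ) ≠ 0 := by positivity
  have h : ∀ k : Fin n, (2 * (n + 1 : ℝ))⁻¹ *
      ((μ i + Real.sqrt (n + 1) * s k i) + (μ i - Real.sqrt (n + 1) * s k i))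
        = (n + 1 : ℝ)⁻¹ * μ i := fun k => by
    field_simp
    ring
  rw [Finset.sum_congr rfl fun k _ => h k, Finset.sum_const, Finset.card_univ,
    Fintype.card_fin, nsmul_eq_mul]
  field_simp
  ring

lemma atom_cov (μ : Fin n → ℝ) (s : Fin n → Fin n → ℝ) (i j : Fin n) :
    ∫ w, (w i - μ i) * (w j - μ j) ∂(atomMeas μ s) = ∑ k, s k i * s k j := by
  rw [atom_integral μ s (fun w => (w i - μ i) * (w j - μ j))]
  simp only [Pi.add_apply, Pi.smul_apply, smul_eq_mul, Pi.sub_apply, sub_self, zero_mul]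
  have hc : Real.sqrt (n + 1) * Real.sqrt (n + 1) = (n + 1 : ℝ) :=
    Real.mul_self_sqrt (by positivity)
  have hne : (n + 1 : ℝ) ≠ 0 := by positivity
  have h : ∀ k : Fin n, (2 * (n + 1 : ℝ))⁻¹ *
      ((μ i + Real.sqrt (n + 1) * s k i - μ i) * (μ j + Real.sqrt (n + 1) * s k j - μ j) +
        (μ i - Real.sqrt (n + 1) * s k i - μ i) * (μ j - Real.sqrt (n + 1) * s k j - μ j))
        = s k i * s k j := fun k => by
    have : (μ i + Real.sqrt (n + 1) * s k i - μ i) * (μ j + Real.sqrt (n + 1) * s k j - μ j) +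
        (μ i - Real.sqrt (n + 1) * s k i - μ i) * (μ j - Real.sqrt (n + 1) * s k j - μ j)
          = 2 * (Real.sqrt (n + 1) * Real.sqrt (n + 1)) * (s k i * s k j) := by ring
    rw [this, hc]
    field_simp
  rw [Finset.sum_congr rfl fun k _ => h k, mul_zero, zero_add]

end Stmt8Aux

open Stmt8Aux

/-- The supremum, over probability measures `ν'` with finite second moments,
mean `μ` and covariance `Σ' ⪯ Σ_dr`, of `∫ (A(w)x + B(w)u)ᵀ P (A(w)x + B(w)u) dν'` equals
`(A(μ)x + B(μ)u)ᵀ P (A(μ)x + B(μ)u) + (Āx + B̄u)ᵀ (Σ_dr ⊗ P) (Āx + B̄u)`, and it is attained. -/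
theorem stmt8 {n d m : ℕ}
    (A : Fin (n + 1) → Matrix (Fin d) (Fin d) ℝ)
    (B : Fin (n + 1) → Matrix (Fin d) (Fin m) ℝ)
    (x : Fin d → ℝ) (u : Fin m → ℝ)
    (P : Matrix (Fin d) (Fin d) ℝ) (hP : P.PosSemidef)
    (μ : Fin n → ℝ)
    (Sdr : Matrix (Fin n) (Fin n) ℝ) (hSdr : Sdr.PosSemidef) :
    IsGreatest
      {y : ℝ | ∃ ν' : Measure (Fin n → ℝ), IsProbabilityMeasure ν' ∧
        (∀ i, Integrable (fun w : Fin n → ℝ => w i) ν') ∧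
        (∀ i j, Integrable (fun w : Fin n → ℝ => w i * w j) ν') ∧
        (∀ i, (∫ w, w i ∂ν') = μ i) ∧
        (Sdr - Matrix.of fun i j =>
          ∫ w, (w i - μ i) * (w j - μ j) ∂ν').PosSemidef ∧
        y = ∫ w, ((Amat A w *ᵥ x + Bmat B w *ᵥ u) ⬝ᵥ
              P *ᵥ (Amat A w *ᵥ x + Bmat B w *ᵥ u)) ∂ν'}
      ((Amat A μ *ᵥ x + Bmat B μ *ᵥ u) ⬝ᵥ P *ᵥ (Amat A μ *ᵥ x + Bmat B μ *ᵥ u) +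
        (AbarTail A *ᵥ x + BbarTail B *ᵥ u) ⬝ᵥ
          (Sdr ⊗ₖ P) *ᵥ (AbarTail A *ᵥ x + BbarTail B *ᵥ u)) := by
  classical
  have hkron : (AbarTail A *ᵥ x + BbarTail B *ᵥ u) ⬝ᵥ
        (Sdr ⊗ₖ P) *ᵥ (AbarTail A *ᵥ x + BbarTail B *ᵥ u)
      = ∑ i, ∑ j, Sdr i j * (zvec A B x u i ⬝ᵥ P *ᵥ zvec A B x u j) := by
    rw [bar_vec_eq A B x u]
    exact kron_quad Sdr P (zvec A B x u)
  constructor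
  · -- membership: the atomic measure attains the value
    set R := CFC.sqrt Sdr with hR
    set s : Fin n → Fin n → ℝ := fun k i => R k i with hs
    have hsym : ∀ a b, R a b = R b a := fun a b => by
      have h := (CFC.sqrt_nonneg Sdr).posSemidef.1
      simpa using congrFun (congrFun h a) b |>.symm
    have hcov : ∀ i j, (∑ k, s k i * s k j) = Sdr i j := fun i j => by
      conv_rhs => rw [← CFC.sqrt_mul_sqrt_self Sdr hSdr.nonneg]
      rw [Matrix.mul_apply]
      refine Finset.sum_congr rfl fun k _ => ?_
      show R k i * R k j = CFC.sqrt Sdr i k * CFC.sqrt Sdr k j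
      rw [← hR, hsym k i]
    haveI hprob := atom_prob μ s
    refine ⟨atomMeas μ s, hprob, fun i => atom_integrable μ s _,
      fun i j => atom_integrable μ s _, fun i => atom_mean μ s i, ?_, ?_⟩
    · have hmat : (Matrix.of fun i j =>
          ∫ w, (w i - μ i) * (w j - μ j) ∂(atomMeas μ s)) = Sdr := by
        ext i j
        rw [Matrix.of_apply, atom_cov μ s i j, hcov i j]
      rw [hmat, sub_self]
      exact Matrix.PosSemidef.zero
    · have hv : ∫ w, ((Amat A w *ᵥ x + Bmat B w *ᵥ u) ⬝ᵥ
            P *ᵥ (Amat A w *ᵥ x + Bmat B w *ᵥ u)) ∂(atomMeas μ s)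
          = (cvec A B x u + ∑ i, μ i • zvec A B x u i) ⬝ᵥ
              P *ᵥ (cvec A B x u + ∑ i, μ i • zvec A B x u i)
            + ∑ i, ∑ j, Sdr i j * (zvec A B x u i ⬝ᵥ P *ᵥ zvec A B x u j) := by
        simp_rw [vec_eq A B x u]
        rw [integral_quad _ (fun i => atom_integrable μ s _)
          (fun i j => atom_integrable μ s _) μ (fun i => atom_mean μ s i)
          P (cvec A B x u) (zvec A B x u)]
        congr 1
        refine Finset.sum_congr rfl fun i _ => Finset.sum_congr rfl fun j _ => ?_
        rw [atom_cov μ s i j, hcov i j]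
      rw [hv, hkron, vec_eq A B x u μ]
  · -- upper bound
    rintro y ⟨ν', hprob, h1, h2, hmean, hpsd, rfl⟩
    haveI := hprob
    have hv : ∫ w, ((Amat A w *ᵥ x + Bmat B w *ᵥ u) ⬝ᵥ
          P *ᵥ (Amat A w *ᵥ x + Bmat B w *ᵥ u)) ∂ν'
        = (cvec A B x u + ∑ i, μ i • zvec A B x u i) ⬝ᵥ
            P *ᵥ (cvec A B x u + ∑ i, μ i • zvec A B x u i)
          + ∑ i, ∑ j, (∫ w, (w i - μ i) * (w j - μ j) ∂ν') *
              (zvec A B x u i ⬝ᵥ P *ᵥ zvec A B x u j) := by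
      simp_rw [vec_eq A B x u]
      exact integral_quad ν' h1 h2 μ hmean P (cvec A B x u) (zvec A B x u)
    rw [hv, hkron, vec_eq A B x u μ]
    refine add_le_add_right ?_ _
    have h0 := pairing_nonneg _ hpsd P hP (zvec A B x u)
    simp only [Matrix.sub_apply, Matrix.of_apply] at h0
    have hsplit : ∑ i, ∑ j, (Sdr i j - (∫ w, (w i - μ i) * (w j - μ j) ∂ν')) *
          (zvec A B x u i ⬝ᵥ P *ᵥ zvec A B x u j)
        = (∑ i, ∑ j, Sdr i j * (zvec A B x u i ⬝ᵥ P *ᵥ zvec A B x u j))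
          - ∑ i, ∑ j, (∫ w, (w i - μ i) * (w j - μ j) ∂ν') *
              (zvec A B x u i ⬝ᵥ P *ᵥ zvec A B x u j) := by
      rw [← Finset.sum_sub_distrib]
      refine Finset.sum_congr rfl fun i _ => ?_
      rw [← Finset.sum_sub_distrib]
      exact Finset.sum_congr rfl fun j _ => by ring
    rw [hsplit] at h0
    linarith

end
end
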